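/- Second-derivative representation of the first spatial derivative: for every x ∈ X and every s ∈ [0,L], x'(s) = ∫₀ᴸ G₂(s,η) x''(η) dη. -/

import Mathlib

open Matrix MeasureTheory intervalIntegral

noncomputable section

/-- The stacked boundary-value vector `col(a, b, c, d) ∈ ℝ^{4n}`. -/
def col4 {n : ℕ} (a b c d : Fin n → ℝ) : (Fin n ⊕ Fin n) ⊕ (Fin n ⊕ Fin n) → ℝ :=
  Sum.elim (Sum.elim a b) (Sum.elim c d)

/-- The `4n × 2n` matrix `K` with block rows `[I,0], [I,L·I], [0,I], [0,I]`. -/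
def Kmat (n : ℕ) (L : ℝ) :
    Matrix ((Fin n ⊕ Fin n) ⊕ (Fin n ⊕ Fin n)) (Fin n ⊕ Fin n) ℝ :=
  Matrix.fromRows
    (Matrix.fromRows (Matrix.fromCols 1 0) (Matrix.fromCols 1 (L • 1)))
    (Matrix.fromRows (Matrix.fromCols 0 1) (Matrix.fromCols 0 1))

/-- The `4n × n` block column `col(0, (L−η)I, 0, I)`. -/
def colB (n : ℕ) (L η : ℝ) :
    Matrix ((Fin n ⊕ Fin n) ⊕ (Fin n ⊕ Fin n)) (Fin n) ℝ :=
  Matrix.fromRows (Matrix.fromRows 0 ((L - η) • 1)) (Matrix.fromRows 0 1)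

/-- `B_c(η) := −(B·K)⁻¹·B·col(0, (L−η)I, 0, I)`. -/
def Bc {n : ℕ} (L : ℝ) (B : Matrix (Fin n ⊕ Fin n) ((Fin n ⊕ Fin n) ⊕ (Fin n ⊕ Fin n)) ℝ)
    (η : ℝ) : Matrix (Fin n ⊕ Fin n) (Fin n) ℝ :=
  -((B * Kmat n L)⁻¹ * (B * colB n L η))

/-- `G₁(s,η) := [I, s·I]·B_c(η) + 1_{[η,L]}(s)·(s−η)·I`. -/
def G1 {n : ℕ} (L : ℝ) (B : Matrix (Fin n ⊕ Fin n) ((Fin n ⊕ Fin n) ⊕ (Fin n ⊕ Fin n)) ℝ)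
    (s η : ℝ) : Matrix (Fin n) (Fin n) ℝ :=
  Matrix.fromCols 1 (s • 1) * Bc L B η + (if η ≤ s then s - η else 0) • 1

/-- `G₂(s,η) := [0, I]·B_c(η) + 1_{[η,L]}(s)·I`. -/
def G2 {n : ℕ} (L : ℝ) (B : Matrix (Fin n ⊕ Fin n) ((Fin n ⊕ Fin n) ⊕ (Fin n ⊕ Fin n)) ℝ)
    (s η : ℝ) : Matrix (Fin n) (Fin n) ℝ :=
  Matrix.fromCols 0 1 * Bc L B η + (if η ≤ s then (1:ℝ) else 0) • 1

/-- Membership in `X`: `x` is twice continuously differentiable on `[0,L]`, with first and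
second derivative witnesses `x'` and `x''`, and satisfies the boundary conditions. -/
structure InX {n : ℕ} (L : ℝ)
    (B : Matrix (Fin n ⊕ Fin n) ((Fin n ⊕ Fin n) ⊕ (Fin n ⊕ Fin n)) ℝ)
    (x x' x'' : ℝ → Fin n → ℝ) : Prop where
  deriv1 : ∀ s ∈ Set.Icc (0:ℝ) L, HasDerivWithinAt x (x' s) (Set.Icc (0:ℝ) L) s
  deriv2 : ∀ s ∈ Set.Icc (0:ℝ) L, HasDerivWithinAt x' (x'' s) (Set.Icc (0:ℝ) L) s
  cont : ContinuousOn x'' (Set.Icc (0:ℝ) L)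
  bc : B *ᵥ col4 (x 0) (x L) (x' 0) (x' L) = 0

/-- The continuous linear map given by matrix-vector multiplication. -/
def mvCLM {m k : Type*} [Fintype m] [Fintype k] (M : Matrix m k ℝ) :
    (k → ℝ) →L[ℝ] (m → ℝ) :=
  LinearMap.toContinuousLinearMap M.mulVecLin

@[simp] lemma mvCLM_apply {m k : Type*} [Fintype m] [Fintype k] (M : Matrix m k ℝ)
    (v : k → ℝ) : mvCLM M v = M *ᵥ v := rfl

lemma intervalIntegral_pi_apply {α : Type*} [Fintype α] {f : ℝ → α → ℝ} {a b : ℝ}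
    (hf : IntervalIntegrable f volume a b) (i : α) :
    (∫ η in a..b, f η) i = ∫ η in a..b, f η i := by
  have := ((ContinuousLinearMap.proj (R := ℝ) (φ := fun _ : α => ℝ) i).intervalIntegral_comp_comm
    hf).symm
  simpa using this

lemma ftc_aux {n : ℕ} {f f' : ℝ → Fin n → ℝ} {L t : ℝ} (ht0 : 0 ≤ t) (htL : t ≤ L)
    (hd : ∀ s ∈ Set.Icc (0:ℝ) L, HasDerivWithinAt f (f' s) (Set.Icc (0:ℝ) L) s)
    (hc : ContinuousOn f' (Set.Icc (0:ℝ) L)) :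
    ∫ η in (0:ℝ)..t, f' η = f t - f 0 := by
  have hsub : Set.Icc (0:ℝ) t ⊆ Set.Icc (0:ℝ) L := Set.Icc_subset_Icc le_rfl htL
  apply integral_eq_sub_of_hasDeriv_right_of_le ht0
  · exact fun u hu => ((hd u (hsub hu)).continuousWithinAt).mono hsub
  · intro u hu
    exact ((hd u ⟨hu.1.le, hu.2.le.trans htL⟩).hasDerivAt
      (Icc_mem_nhds hu.1 (hu.2.trans_le htL))).hasDerivWithinAt
  · exact (hc.mono hsub).intervalIntegrable_of_Icc ht0

theorem second_derivative_representation_of_first_derivative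
    (n : ℕ) (hn : 1 ≤ n) (L : ℝ) (hL : 0 < L)
    (B : Matrix (Fin n ⊕ Fin n) ((Fin n ⊕ Fin n) ⊕ (Fin n ⊕ Fin n)) ℝ)
    (hB : IsUnit (B * Kmat n L))
    (x x' x'' : ℝ → Fin n → ℝ) (hX : InX L B x x' x'')
    (s : ℝ) (hs : s ∈ Set.Icc (0:ℝ) L) :
    x' s = ∫ η in (0:ℝ)..L, G2 L B s η *ᵥ x'' η := by
  obtain ⟨hs0, hsL⟩ := hs
  have hx'c : ContinuousOn x' (Set.Icc 0 L) := fun t ht => (hX.deriv2 t ht).continuousWithinAt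
  have hxc : ContinuousOn x (Set.Icc 0 L) := fun t ht => (hX.deriv1 t ht).continuousWithinAt
  have hi0 : IntervalIntegrable x'' volume 0 L := hX.cont.intervalIntegrable_of_Icc hL.le
  have hi2 : IntervalIntegrable (fun η => (L - η) • x'' η) volume 0 L :=
    ((continuousOn_const.sub continuousOn_id).smul hX.cont).intervalIntegrable_of_Icc hL.le
  have hI1 : ∫ η in (0:ℝ)..L, x'' η = x' L - x' 0 := ftc_aux hL.le le_rfl hX.deriv2 hX.cont
  have hIs : ∫ η in (0:ℝ)..s, x'' η = x' s - x' 0 := ftc_aux hs0 hsL hX.deriv2 hX.cont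
  -- integration by parts for `(L - η) • x'' η`
  have hI2 : ∫ η in (0:ℝ)..L, (L - η) • x'' η = x L - x 0 - L • x' 0 := by
    have h := integral_eq_sub_of_hasDeriv_right_of_le (f := fun η => (L - η) • x' η + x η)
      (f' := fun η => (L - η) • x'' η) hL.le
      (((continuousOn_const.sub continuousOn_id).smul hx'c).add hxc)
      (by
        intro u hu
        have hmem : u ∈ Set.Icc (0:ℝ) L := ⟨hu.1.le, hu.2.le⟩
        have hnhds : Set.Icc (0:ℝ) L ∈ nhds u := Icc_mem_nhds hu.1 hu.2
        have h1 : HasDerivAt (fun η : ℝ => L - η) (-1) u := by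
          simpa using (hasDerivAt_id u).const_sub L
        have h2 : HasDerivAt x' (x'' u) u := (hX.deriv2 u hmem).hasDerivAt hnhds
        have h3 : HasDerivAt x (x' u) u := (hX.deriv1 u hmem).hasDerivAt hnhds
        have h4 := (h1.smul h2).add h3
        have : (L - u) • x'' u + (-1 : ℝ) • x' u + x' u = (L - u) • x'' u := by
          simp
        rw [this] at h4
        exact h4.hasDerivWithinAt)
      hi2
    rw [h]
    simp only [sub_self, zero_smul, zero_add, sub_zero]
    abel
  -- the "A" matrix and the "F" vector function
  set C : Matrix (Fin n ⊕ Fin n) ((Fin n ⊕ Fin n) ⊕ (Fin n ⊕ Fin n)) ℝ :=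
    (B * Kmat n L)⁻¹ * B with hCdef
  set A : Matrix (Fin n) ((Fin n ⊕ Fin n) ⊕ (Fin n ⊕ Fin n)) ℝ :=
    Matrix.fromCols 0 1 * (-C) with hAdef
  set F : ℝ → ((Fin n ⊕ Fin n) ⊕ (Fin n ⊕ Fin n)) → ℝ :=
    fun η => col4 0 ((L - η) • x'' η) 0 (x'' η) with hFdef
  have hFcont : ContinuousOn F (Set.Icc (0:ℝ) L) := by
    rw [continuousOn_pi]
    rintro ((i | i) | (i | i)) <;>
      simp only [hFdef, col4, Sum.elim_inl, Sum.elim_inr, Pi.smul_apply, Pi.zero_apply,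
        smul_eq_mul]
    · exact continuousOn_const
    · exact (continuousOn_const.sub continuousOn_id).mul
        ((continuous_apply i).comp_continuousOn hX.cont)
    · exact continuousOn_const
    · exact (continuous_apply i).comp_continuousOn hX.cont
  have hFint : IntervalIntegrable F volume 0 L := hFcont.intervalIntegrable_of_Icc hL.le
  -- the value of `∫ F`
  have hFI : (∫ η in (0:ℝ)..L, F η) = col4 0 (x L - x 0 - L • x' 0) 0 (x' L - x' 0) := by
    funext i
    rw [intervalIntegral_pi_apply hFint i]
    rcases i with (i | i) | (i | i)
    · simp [hFdef, col4]
    · have h := intervalIntegral_pi_apply hi2 i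
      simp only [hFdef, col4, Sum.elim_inl, Sum.elim_inr]
      rw [← h, hI2]
    · simp [hFdef, col4]
    · have h := intervalIntegral_pi_apply hi0 i
      simp only [hFdef, col4, Sum.elim_inl, Sum.elim_inr]
      rw [← h, hI1]
  -- rewrite the integrand
  have hG2m : ∀ η, G2 L B s η = A * colB n L η + (if η ≤ s then (1:ℝ) else 0) • 1 := by
    intro η
    rw [G2, Bc, hAdef, hCdef,
      show (B * Kmat n L)⁻¹ * (B * colB n L η) = ((B * Kmat n L)⁻¹ * B) * colB n L η from
        (Matrix.mul_assoc _ _ _).symm,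
      ← Matrix.neg_mul]
    erw [← Matrix.mul_assoc]
    rfl
  have hcb : ∀ η, colB n L η *ᵥ x'' η = F η := by
    intro η
    funext i
    rcases i with (i | i) | (i | i) <;>
      simp [colB, hFdef, col4, Matrix.smul_mulVec]
  have hint : ∀ η, G2 L B s η *ᵥ x'' η =
      mvCLM A (F η) + Set.indicator {u : ℝ | u ≤ s} x'' η := by
    intro η
    rw [hG2m η, Matrix.add_mulVec, ← Matrix.mulVec_mulVec, hcb η, Matrix.smul_mulVec,
      Matrix.one_mulVec, mvCLM_apply]
    congr 1
    by_cases h : η ≤ s <;> simp [Set.indicator, h]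
  have hAint : IntervalIntegrable (fun η => mvCLM A (F η)) volume 0 L :=
    ((mvCLM A).continuous.comp_continuousOn hFcont).intervalIntegrable_of_Icc hL.le
  have hind : IntervalIntegrable ({u : ℝ | u ≤ s}.indicator x'') volume 0 L := by
    rw [intervalIntegrable_iff_integrableOn_Ioc_of_le hL.le] at hi0 ⊢
    exact hi0.indicator measurableSet_Iic
  -- boundary algebra
  have hK : Kmat n L *ᵥ Sum.elim (x 0) (x' 0) = col4 (x 0) (x 0 + L • x' 0) (x' 0) (x' 0) := by
    funext i
    rcases i with (i | i) | (i | i) <;>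
      simp [Kmat, col4, Matrix.fromBlocks_mulVec, Matrix.smul_mulVec]
  have hcol : col4 0 (x L - x 0 - L • x' 0) 0 (x' L - x' 0)
      = col4 (x 0) (x L) (x' 0) (x' L) - Kmat n L *ᵥ Sum.elim (x 0) (x' 0) := by
    rw [hK]
    funext i
    rcases i with (i | i) | (i | i) <;> simp [col4] <;> ring
  have hBcol : B *ᵥ col4 0 (x L - x 0 - L • x' 0) 0 (x' L - x' 0)
      = -((B * Kmat n L) *ᵥ Sum.elim (x 0) (x' 0)) := by
    rw [hcol, Matrix.mulVec_sub, hX.bc, Matrix.mulVec_mulVec]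
    simp
  have hdet : IsUnit (B * Kmat n L).det := (Matrix.isUnit_iff_isUnit_det _).mp hB
  have hAcol : A *ᵥ col4 0 (x L - x 0 - L • x' 0) 0 (x' L - x' 0) = x' 0 := by
    have h1 : C *ᵥ col4 0 (x L - x 0 - L • x' 0) 0 (x' L - x' 0)
        = -(Sum.elim (x 0) (x' 0)) := by
      rw [hCdef, ← Matrix.mulVec_mulVec, hBcol, Matrix.mulVec_neg, Matrix.mulVec_mulVec,
        Matrix.nonsing_inv_mul _ hdet, Matrix.one_mulVec]
    rw [hAdef]
    erw [← Matrix.mulVec_mulVec]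
    rw [Matrix.neg_mulVec, h1, neg_neg,
      Matrix.fromCols_mulVec_sumElim]
    simp
  -- assemble
  rw [intervalIntegral.integral_congr
      (g := fun η => mvCLM A (F η) + Set.indicator {u : ℝ | u ≤ s} x'' η)
      (fun η _ => hint η),
    intervalIntegral.integral_add hAint hind,
    (mvCLM A).intervalIntegral_comp_comm hFint,
    intervalIntegral.integral_indicator ⟨hs0, hsL⟩, hIs, mvCLM_apply, hFI, hAcol]
  abel
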